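/- Let P be a convex compact set of feasible utility vectors in R^n_{≥0}, δ ≥ 0, ε > 0, and ε' = ε/(1+δ). If Û ∈ P satisfies max_{U'∈P} Σ_i (U'_i + ε')/(Û_i + ε') ≤ n(1+δ), then Û is a (δ,ε)-core outcome: there is no S ⊆ [n] and U' ∈ P with (|S|/n)·U'_i ≥ (1+δ)·Û_i + ε for all i ∈ S and at least one strict inequality. -/

import Mathlib

/-- Approximate first-order optimality of the smoothed Nash welfare implies an
approximate core: if `Û ∈ P` satisfies `max_{U'∈P} ∑ i (U'_i+ε')/(Û_i+ε') ≤ n(1+δ)`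
with `ε' = ε/(1+δ)`, then `Û` is a `(δ,ε)`-core outcome. -/
theorem approx_optimality_implies_approx_core
    {n : ℕ} (P : Set (Fin n → ℝ)) (hconv : Convex ℝ P) (hcpt : IsCompact P)
    (hnonneg : ∀ U ∈ P, ∀ i, 0 ≤ U i)
    (δ ε : ℝ) (hδ : 0 ≤ δ) (hε : 0 < ε)
    (Uhat : Fin n → ℝ) (hUhat : Uhat ∈ P)
    (hopt : ∀ U' ∈ P, ∑ i, (U' i + ε / (1 + δ)) / (Uhat i + ε / (1 + δ))
              ≤ (n : ℝ) * (1 + δ)) :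
    ¬ ∃ (S : Finset (Fin n)) (U' : Fin n → ℝ), U' ∈ P ∧
        (∀ i ∈ S, ((S.card : ℝ) / n) * U' i ≥ (1 + δ) * Uhat i + ε) ∧
        (∃ i ∈ S, ((S.card : ℝ) / n) * U' i > (1 + δ) * Uhat i + ε) := by
  rintro ⟨S, U', hU'P, hall, i0, hi0S, hstrict⟩
  have h1δ : (0:ℝ) < 1 + δ := by linarith
  set ε' : ℝ := ε / (1 + δ) with hε'def
  have hε' : 0 < ε' := div_pos hε h1δ
  have hεeq : (1 + δ) * ε' = ε := by rw [hε'def]; field_simp [h1δ.ne']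
  have hn : 0 < (n : ℝ) := by
    have : 0 < n := i0.pos
    exact_mod_cast this
  have hSc : 0 < (S.card : ℝ) := by
    exact_mod_cast Finset.card_pos.mpr ⟨i0, hi0S⟩
  have hdpos : ∀ i, 0 < Uhat i + ε' := fun i => by
    have := hnonneg Uhat hUhat i; linarith
  have hfrac : 0 < (S.card : ℝ) / n := div_pos hSc hn
  have hinv : 0 < (n : ℝ) / S.card := div_pos hn hSc
  -- key per-coordinate bound
  have key : ∀ i ∈ S, (1 + δ) * ((n : ℝ) / S.card) ≤ (U' i + ε') / (Uhat i + ε') := by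
    intro i hi
    rw [le_div_iff₀ (hdpos i)]
    have h2 : 0 ≤ (S.card : ℝ) / n * ε' := by positivity
    have h4 : (1 + δ) * (Uhat i + ε') ≤ (S.card : ℝ) / n * (U' i + ε') := by
      have h1 := hall i hi
      have e1 : (1 + δ) * (Uhat i + ε') = (1 + δ) * Uhat i + ε := by
        rw [mul_add, hεeq]
      rw [e1, mul_add]; linarith
    have h6 := mul_le_mul_of_nonneg_left h4 hinv.le
    calc (1 + δ) * ((n : ℝ) / S.card) * (Uhat i + ε')
        = (n : ℝ) / S.card * ((1 + δ) * (Uhat i + ε')) := by ring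
      _ ≤ (n : ℝ) / S.card * ((S.card : ℝ) / n * (U' i + ε')) := h6
      _ = U' i + ε' := by field_simp
  have keystrict : (1 + δ) * ((n : ℝ) / S.card) < (U' i0 + ε') / (Uhat i0 + ε') := by
    rw [lt_div_iff₀ (hdpos i0)]
    have h2 : 0 ≤ (S.card : ℝ) / n * ε' := by positivity
    have h4 : (1 + δ) * (Uhat i0 + ε') < (S.card : ℝ) / n * (U' i0 + ε') := by
      have e1 : (1 + δ) * (Uhat i0 + ε') = (1 + δ) * Uhat i0 + ε := by
        rw [mul_add, hεeq]
      rw [e1, mul_add]; linarith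
    have h6 := mul_lt_mul_of_pos_left h4 hinv
    calc (1 + δ) * ((n : ℝ) / S.card) * (Uhat i0 + ε')
        = (n : ℝ) / S.card * ((1 + δ) * (Uhat i0 + ε')) := by ring
      _ < (n : ℝ) / S.card * ((S.card : ℝ) / n * (U' i0 + ε')) := h6
      _ = U' i0 + ε' := by field_simp
  -- sum over S is strictly bigger than n(1+δ)
  have hsumS : (n : ℝ) * (1 + δ) < ∑ i ∈ S, (U' i + ε') / (Uhat i + ε') := by
    have hlt : ∑ _i ∈ S, (1 + δ) * ((n : ℝ) / S.card)
        < ∑ i ∈ S, (U' i + ε') / (Uhat i + ε') :=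
      Finset.sum_lt_sum key ⟨i0, hi0S, keystrict⟩
    have hconst : ∑ _i ∈ S, (1 + δ) * ((n : ℝ) / S.card) = (n : ℝ) * (1 + δ) := by
      rw [Finset.sum_const, nsmul_eq_mul]
      field_simp
    linarith
  have hrest : 0 ≤ ∑ i ∈ Sᶜ, (U' i + ε') / (Uhat i + ε') := by
    apply Finset.sum_nonneg
    intro i _
    have h1 := hnonneg U' hU'P i
    exact div_nonneg (by linarith) (hdpos i).le
  have htotal : ∑ i ∈ S, (U' i + ε') / (Uhat i + ε')
      + ∑ i ∈ Sᶜ, (U' i + ε') / (Uhat i + ε')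
      = ∑ i, (U' i + ε') / (Uhat i + ε') := Finset.sum_add_sum_compl S _
  have hle := hopt U' hU'P
  linarith
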